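/- A complete binary tree of height h, and every subdivision of it, has pathwidth at least ⌈h/2⌉. -/

import Mathlib

open SimpleGraph

/-- A tree decomposition of a graph `G`. -/
structure TreeDecomp {V : Type} (G : SimpleGraph V) where
  ι : Type
  tree : SimpleGraph ι
  isTree : tree.IsTree
  bag : ι → Finset V
  covers : ∀ v : V, ∃ x, v ∈ bag x
  coversEdge : ∀ ⦃u v : V⦄, G.Adj u v → ∃ x, u ∈ bag x ∧ v ∈ bag x
  bagConn : ∀ v : V, (tree.induce {x | v ∈ bag x}).Connected

/-- `G` has a tree decomposition of width at most `k` (bags of size at most `k+1`). -/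
def TwLE {V : Type} (G : SimpleGraph V) (k : ℕ) : Prop :=
  ∃ D : TreeDecomp G, ∀ x, (D.bag x).card ≤ k + 1

/-- A path decomposition of a graph `G`: a sequence of bags. -/
structure PathDecomp {V : Type} (G : SimpleGraph V) where
  n : ℕ
  bag : Fin n → Finset V
  covers : ∀ v : V, ∃ i, v ∈ bag i
  coversEdge : ∀ ⦃u v : V⦄, G.Adj u v → ∃ i, u ∈ bag i ∧ v ∈ bag i
  consecutive : ∀ (v : V) (i j k : Fin n), i ≤ j → j ≤ k → v ∈ bag i → v ∈ bag k → v ∈ bag j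

/-- `G` has a path decomposition of width at most `k` (bags of size at most `k+1`). -/
def PwLE {V : Type} (G : SimpleGraph V) (k : ℕ) : Prop :=
  ∃ P : PathDecomp G, ∀ i, (P.bag i).card ≤ k + 1

/-- A copy of a subdivision of the tree `T` inside the graph `G`:
branch vertices `φ x`, and for each edge of `T` a path of `G` between the
corresponding branch vertices, internally disjoint from all branch vertices
and from the paths of all other edges. -/
structure SubdivCopy {α V : Type} (T : SimpleGraph α) (G : SimpleGraph V) where
  φ : α → V
  inj : Function.Injective φ
  path : ∀ ⦃x y : α⦄, T.Adj x y → G.Walk (φ x) (φ y)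
  isPath : ∀ ⦃x y : α⦄ (h : T.Adj x y), (path h).IsPath
  branch : ∀ ⦃x y : α⦄ (h : T.Adj x y) (z : α), φ z ∈ (path h).support → z = x ∨ z = y
  disj : ∀ ⦃x y x' y' : α⦄ (h : T.Adj x y) (h' : T.Adj x' y'),
    ({x, y} : Set α) ≠ {x', y'} →
    ∀ v, v ∈ (path h).support → v ∈ (path h').support →
      v ∈ φ '' (({x, y} : Set α) ∩ {x', y'})

/-- The set of vertices used by a subdivision copy. -/
def SubdivCopy.supp {α V : Type} {T : SimpleGraph α} {G : SimpleGraph V}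
    (c : SubdivCopy T G) : Set V :=
  Set.range c.φ ∪ {v | ∃ x y, ∃ h : T.Adj x y, v ∈ (c.path h).support}

/-- `G` contains a subdivision of `T` as a subgraph. -/
def ContainsSubdiv {α V : Type} (T : SimpleGraph α) (G : SimpleGraph V) : Prop :=
  Nonempty (SubdivCopy T G)

/-- `S` is (isomorphic to) a subdivision of `T`: a subdivision copy of `T`
using all vertices and all edges of `S`. -/
def IsSubdivisionOf {α W : Type} (T : SimpleGraph α) (S : SimpleGraph W) : Prop :=
  ∃ c : SubdivCopy T S, c.supp = Set.univ ∧
    ∀ ⦃u w : W⦄, S.Adj u w → ∃ x y, ∃ h : T.Adj x y, s(u, w) ∈ (c.path h).edges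

/-- The complete binary tree of height `h`, as a simple graph: vertices are
binary strings of length at most `h`, with edges between a string and its
one-letter extensions. -/
def CBT (h : ℕ) : SimpleGraph {l : List Bool // l.length ≤ h} :=
  SimpleGraph.fromRel (fun x y => ∃ b, y.val = b :: x.val)

/-- The root of the complete binary tree. -/
def CBTroot (h : ℕ) : {l : List Bool // l.length ≤ h} := ⟨[], by simp⟩

/-- The complete ternary tree of height `h`, as a simple graph. -/
def CTT (h : ℕ) : SimpleGraph {l : List (Fin 3) // l.length ≤ h} :=
  SimpleGraph.fromRel (fun x y => ∃ b, y.val = b :: x.val)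

/-- The root of the complete ternary tree. -/
def CTTroot (h : ℕ) : {l : List (Fin 3) // l.length ≤ h} := ⟨[], by simp⟩

/-- There are `a ∈ A` and `b ∈ B` joined by a walk of `G` avoiding `C`. -/
def LinkedAvoiding {V : Type} (G : SimpleGraph V) (A B C : Set V) : Prop :=
  ∃ a ∈ A, ∃ b ∈ B, ∃ p : G.Walk a b, ∀ x ∈ p.support, x ∉ C

/-- The classes `𝒯_h`: `InT 0 G` iff `G` is connected (hence non-empty);
`InT (h+1) G` iff `G` is connected and has three pairwise disjoint vertex sets
inducing graphs in `𝒯_h`, any two of which are linked by a path avoiding the third. -/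
def InTAux : ℕ → (V : Type) → SimpleGraph V → Prop
  | 0, _, G => G.Connected
  | h + 1, V, G => G.Connected ∧ ∃ V₁ V₂ V₃ : Set V,
      Disjoint V₁ V₂ ∧ Disjoint V₁ V₃ ∧ Disjoint V₂ V₃ ∧
      InTAux h V₁ (G.induce V₁) ∧ InTAux h V₂ (G.induce V₂) ∧ InTAux h V₃ (G.induce V₃) ∧
      LinkedAvoiding G V₁ V₂ V₃ ∧ LinkedAvoiding G V₁ V₃ V₂ ∧ LinkedAvoiding G V₂ V₃ V₁

def InT (h : ℕ) {V : Type} (G : SimpleGraph V) : Prop := InTAux h V G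

/-! ### Auxiliary development -/

section Aux

variable {V : Type} {G : SimpleGraph V}

/-- Crossing lemma: a walk from a vertex in bag `i` to a vertex in bag `k` meets bag `j`
for any `i ≤ j ≤ k`. -/
lemma PathDecomp.cross (P : PathDecomp G) :
    ∀ {u w : V} (p : G.Walk u w) {i j k : Fin P.n}, i ≤ j → j ≤ k →
      u ∈ P.bag i → w ∈ P.bag k → ∃ v ∈ p.support, v ∈ P.bag j := by
  intro u w p
  induction p with
  | nil =>
    intro i j k hij hjk hu hw
    exact ⟨_, by simp, P.consecutive _ i j k hij hjk hu hw⟩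
  | @cons u x w ha p ih =>
    intro i j k hij hjk hu hw
    obtain ⟨i', hui', hxi'⟩ := P.coversEdge ha
    rcases le_total j i' with h' | h'
    · exact ⟨u, by simp, P.consecutive u i j i' hij h' hu hui'⟩
    · obtain ⟨v, hv, hvb⟩ := ih h' hjk hxi' hw
      exact ⟨v, by simp [hv], hvb⟩

/-- Pull back a subdivision copy along an injective graph-homomorphism on index trees. -/
def SubdivCopy.comap {α β : Type} {T : SimpleGraph α} {T' : SimpleGraph β}
    (c : SubdivCopy T G) (f : β → α) (hf : Function.Injective f)
    (hadj : ∀ ⦃x y : β⦄, T'.Adj x y → T.Adj (f x) (f y)) : SubdivCopy T' G where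
  φ := c.φ ∘ f
  inj := c.inj.comp hf
  path := fun _ _ h => c.path (hadj h)
  isPath := fun _ _ h => c.isPath (hadj h)
  branch := by
    intro x y h z hz
    rcases c.branch (hadj h) (f z) hz with h1 | h1
    · exact Or.inl (hf h1)
    · exact Or.inr (hf h1)
  disj := by
    intro x y x' y' h h' hne v hv hv'
    have hne' : ({f x, f y} : Set α) ≠ {f x', f y'} := by
      rw [← Set.image_pair, ← Set.image_pair]
      intro he
      exact hne (Set.image_eq_image hf |>.mp he)
    have := c.disj (hadj h) (hadj h') hne' v hv hv'
    rw [← Set.image_pair, ← Set.image_pair, ← Set.image_inter hf, ← Set.image_comp] at this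
    simpa [Set.image_pair] using this

lemma SubdivCopy.mem_supp_φ {α : Type} {T : SimpleGraph α} (c : SubdivCopy T G) (x : α) :
    c.φ x ∈ c.supp := Or.inl ⟨x, rfl⟩

lemma SubdivCopy.mem_supp_path {α : Type} {T : SimpleGraph α} (c : SubdivCopy T G)
    {x y : α} (h : T.Adj x y) {v : V} (hv : v ∈ (c.path h).support) : v ∈ c.supp :=
  Or.inr ⟨x, y, h, hv⟩

lemma SubdivCopy.comap_supp_subset {α β : Type} {T : SimpleGraph α} {T' : SimpleGraph β}
    (c : SubdivCopy T G) (f : β → α) (hf : Function.Injective f)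
    (hadj : ∀ ⦃x y : β⦄, T'.Adj x y → T.Adj (f x) (f y)) :
    (c.comap f hf hadj).supp ⊆ c.supp := by
  rintro v (⟨z, rfl⟩ | ⟨x, y, h, hv⟩)
  · exact c.mem_supp_φ (f z)
  · exact c.mem_supp_path (hadj h) hv

lemma SubdivCopy.mem_comap_supp {α β : Type} {T : SimpleGraph α} {T' : SimpleGraph β}
    (c : SubdivCopy T G) (f : β → α) (hf : Function.Injective f)
    (hadj : ∀ ⦃x y : β⦄, T'.Adj x y → T.Adj (f x) (f y)) {v : V} :
    v ∈ (c.comap f hf hadj).supp ↔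
      (∃ z, c.φ (f z) = v) ∨ ∃ x y, ∃ h : T'.Adj x y, v ∈ (c.path (hadj h)).support := by
  constructor
  · rintro (⟨z, rfl⟩ | ⟨x, y, h, hv⟩)
    · exact Or.inl ⟨z, rfl⟩
    · exact Or.inr ⟨x, y, h, hv⟩
  · rintro (⟨z, rfl⟩ | ⟨x, y, h, hv⟩)
    · exact Or.inl ⟨z, rfl⟩
    · exact Or.inr ⟨x, y, h, hv⟩

end Aux
section CBTAux

variable {V : Type} {G : SimpleGraph V}

lemma cbt_adj_cons {h : ℕ} (b : Bool) (l : List Bool) (hl : (b :: l).length ≤ h) :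
    (CBT h).Adj ⟨l, by simp at hl ⊢; omega⟩ ⟨b :: l, hl⟩ := by
  rw [CBT, fromRel_adj]
  refine ⟨?_, Or.inl ⟨b, rfl⟩⟩
  intro he
  have := congrArg (fun x => (Subtype.val x).length) he
  simp at this

/-- The extension map embedding `CBT h'` as the subtree above the node `s` in `CBT h`. -/
def extNode {h h' : ℕ} (s : List Bool) (hs : s.length + h' ≤ h)
    (x : {l : List Bool // l.length ≤ h'}) : {l : List Bool // l.length ≤ h} :=
  ⟨x.val ++ s, by have := x.2; simp; omega⟩

lemma extNode_inj {h h' : ℕ} (s : List Bool) (hs : s.length + h' ≤ h) :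
    Function.Injective (extNode (h := h) (h' := h') s hs) := by
  intro x y hxy
  apply Subtype.ext
  have : x.val ++ s = y.val ++ s := congrArg Subtype.val hxy
  exact List.append_cancel_right this

lemma extNode_adj {h h' : ℕ} (s : List Bool) (hs : s.length + h' ≤ h)
    {x y : {l : List Bool // l.length ≤ h'}} (hxy : (CBT h').Adj x y) :
    (CBT h).Adj (extNode s hs x) (extNode s hs y) := by
  rw [CBT, fromRel_adj] at hxy ⊢
  obtain ⟨hne, hc⟩ := hxy
  refine ⟨fun he => hne (extNode_inj s hs he), ?_⟩
  rcases hc with ⟨b, hb⟩ | ⟨b, hb⟩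
  · exact Or.inl ⟨b, by simp [extNode, hb]⟩
  · exact Or.inr ⟨b, by simp [extNode, hb]⟩

lemma extNode_suffix {h h' : ℕ} (s : List Bool) (hs : s.length + h' ≤ h)
    (x : {l : List Bool // l.length ≤ h'}) : s <:+ (extNode s hs x).val :=
  List.suffix_append _ _

/-- The restriction of a subdivision copy of `CBT h` to the subtree above node `s`. -/
def SubdivCopy.restrict {h h' : ℕ} (c : SubdivCopy (CBT h) G) (s : List Bool)
    (hs : s.length + h' ≤ h) : SubdivCopy (CBT h') G :=
  c.comap (extNode s hs) (extNode_inj s hs) (fun _ _ hxy => extNode_adj s hs hxy)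

lemma SubdivCopy.restrict_supp_subset {h h' : ℕ} (c : SubdivCopy (CBT h) G) (s : List Bool)
    (hs : s.length + h' ≤ h) : (c.restrict s hs).supp ⊆ c.supp :=
  c.comap_supp_subset _ _ _

/-- Every vertex in the support of a restricted copy is `c.φ z` for `z` above `s`, or lies on
the path of an edge both of whose endpoints are above `s`. -/
lemma SubdivCopy.mem_restrict_supp {h h' : ℕ} (c : SubdivCopy (CBT h) G) (s : List Bool)
    (hs : s.length + h' ≤ h) {v : V} (hv : v ∈ (c.restrict s hs).supp) :
    (∃ z, s <:+ z.val ∧ c.φ z = v) ∨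
      ∃ x y, ∃ hxy : (CBT h).Adj x y, s <:+ x.val ∧ s <:+ y.val ∧ v ∈ (c.path hxy).support := by
  rcases (c.mem_comap_supp _ _ _).mp hv with ⟨z, hz⟩ | ⟨x, y, hxy, hv'⟩
  · exact Or.inl ⟨_, extNode_suffix s hs z, hz⟩
  · exact Or.inr ⟨_, _, extNode_adj s hs hxy, extNode_suffix s hs x, extNode_suffix s hs y, hv'⟩

/-- Two restrictions to incomparable nodes have disjoint supports. -/
lemma SubdivCopy.restrict_disj {h h₁ h₂ : ℕ} (c : SubdivCopy (CBT h) G)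
    {s₁ s₂ : List Bool} (hs₁ : s₁.length + h₁ ≤ h) (hs₂ : s₂.length + h₂ ≤ h)
    (hinc : ¬ s₁ <:+ s₂ ∧ ¬ s₂ <:+ s₁) {v : V}
    (h₁v : v ∈ (c.restrict s₁ hs₁).supp) (h₂v : v ∈ (c.restrict s₂ hs₂).supp) : False := by
  have comp : ∀ l : List Bool, s₁ <:+ l → s₂ <:+ l → False := fun l ha hb => by
    rcases List.suffix_or_suffix_of_suffix ha hb with h' | h'
    · exact hinc.1 h'
    · exact hinc.2 h'
  rcases c.mem_restrict_supp s₁ hs₁ h₁v with ⟨z, hz, rfl⟩ | ⟨x, y, hxy, hx, hy, hv⟩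
  · rcases c.mem_restrict_supp s₂ hs₂ h₂v with ⟨z', hz', he⟩ | ⟨x', y', hxy', hx', hy', hv'⟩
    · exact comp z.val hz (c.inj he.symm ▸ hz')
    · rcases c.branch hxy' z hv' with rfl | rfl
      · exact comp z.val hz hx'
      · exact comp z.val hz hy'
  · have hsuff1 : ∀ w, w ∈ ({x, y} : Set _) → s₁ <:+ w.val := by
      intro w hw
      simp only [Set.mem_insert_iff, Set.mem_singleton_iff] at hw
      rcases hw with rfl | rfl
      · exact hx
      · exact hy
    rcases c.mem_restrict_supp s₂ hs₂ h₂v with ⟨z', hz', rfl⟩ | ⟨x', y', hxy', hx', hy', hv'⟩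
    · rcases c.branch hxy z' hv with rfl | rfl
      · exact comp z'.val hx hz'
      · exact comp z'.val hy hz'
    · have hsuff2 : ∀ w, w ∈ ({x', y'} : Set _) → s₂ <:+ w.val := by
        intro w hw
        simp only [Set.mem_insert_iff, Set.mem_singleton_iff] at hw
        rcases hw with rfl | rfl
        · exact hx'
        · exact hy'
      by_cases hset : ({x, y} : Set _) = {x', y'}
      · have hx2 : x ∈ ({x', y'} : Set _) := by rw [← hset]; exact Set.mem_insert _ _
        exact comp x.val hx (hsuff2 x hx2)
      · obtain ⟨w, hw, _⟩ := c.disj hxy hxy' hset v hv hv'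
        exact comp w.val (hsuff1 w hw.1) (hsuff2 w hw.2)

end CBTAux
section Walks

variable {V : Type} {G : SimpleGraph V}

/-- The path of an edge whose endpoints are both not above `s` avoids the support of the
restriction to `s`. -/
lemma SubdivCopy.path_avoid_restrict {h h' : ℕ} (c : SubdivCopy (CBT h) G) (s : List Bool)
    (hs : s.length + h' ≤ h) {x y : {l : List Bool // l.length ≤ h}} (hxy : (CBT h).Adj x y)
    (hx : ¬ s <:+ x.val) (hy : ¬ s <:+ y.val) {v : V} (hv : v ∈ (c.path hxy).support) :
    v ∉ (c.restrict s hs).supp := by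
  intro hmem
  have hsuffxy : ∀ w, w ∈ ({x, y} : Set _) → ¬ s <:+ w.val := by
    intro w hw
    simp only [Set.mem_insert_iff, Set.mem_singleton_iff] at hw
    rcases hw with rfl | rfl
    · exact hx
    · exact hy
  rcases c.mem_restrict_supp s hs hmem with ⟨z, hz, rfl⟩ | ⟨x', y', hxy', hx', hy', hv'⟩
  · rcases c.branch hxy z hv with rfl | rfl
    · exact hx hz
    · exact hy hz
  · have hsuff2 : ∀ w, w ∈ ({x', y'} : Set _) → s <:+ w.val := by
      intro w hw
      simp only [Set.mem_insert_iff, Set.mem_singleton_iff] at hw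
      rcases hw with rfl | rfl
      · exact hx'
      · exact hy'
    by_cases hset : ({x, y} : Set _) = {x', y'}
    · exact hx (hsuff2 x (by rw [← hset]; exact Set.mem_insert _ _))
    · obtain ⟨w, hw, _⟩ := c.disj hxy hxy' hset v hv hv'
      exact hsuffxy w hw.1 (hsuff2 w hw.2)

/-- Every branch vertex is joined to the root by a walk inside the support. -/
lemma SubdivCopy.rootWalk_branch {h : ℕ} (c : SubdivCopy (CBT h) G) :
    ∀ (l : List Bool) (hl : l.length ≤ h),
      ∃ p : G.Walk (c.φ ⟨l, hl⟩) (c.φ ⟨[], by simp⟩), ∀ x ∈ p.support, x ∈ c.supp := by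
  intro l
  induction l with
  | nil =>
    intro hl
    refine ⟨SimpleGraph.Walk.nil, ?_⟩
    intro x hx
    simp only [SimpleGraph.Walk.support_nil, List.mem_singleton] at hx
    subst hx
    exact c.mem_supp_φ _
  | cons b t ih =>
    intro hl
    have ht : t.length ≤ h := by simp at hl; omega
    have hadj : (CBT h).Adj ⟨t, ht⟩ ⟨b :: t, hl⟩ := cbt_adj_cons b t hl
    obtain ⟨p, hp⟩ := ih ht
    refine ⟨(c.path hadj).reverse.append p, ?_⟩
    intro x hx
    rcases (SimpleGraph.Walk.mem_support_append_iff _ _).mp hx with hx' | hx'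
    · exact c.mem_supp_path hadj (by simpa using hx')
    · exact hp x hx'

/-- Every vertex of the support is joined to the root by a walk inside the support. -/
lemma SubdivCopy.rootWalk {h : ℕ} (c : SubdivCopy (CBT h) G) {v : V} (hv : v ∈ c.supp) :
    ∃ p : G.Walk v (c.φ ⟨[], by simp⟩), ∀ x ∈ p.support, x ∈ c.supp := by
  classical
  rcases hv with ⟨z, rfl⟩ | ⟨x, y, hxy, hv'⟩
  · obtain ⟨p, hp⟩ := c.rootWalk_branch z.val z.2
    exact ⟨p.copy (by simp) rfl, by simpa using hp⟩
  · obtain ⟨p, hp⟩ := c.rootWalk_branch x.val x.2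
    refine ⟨((c.path hxy).takeUntil v hv').reverse.append (p.copy (by simp) rfl), ?_⟩
    intro w hw
    rcases (SimpleGraph.Walk.mem_support_append_iff _ _).mp hw with hw' | hw'
    · exact c.mem_supp_path hxy
        (SimpleGraph.Walk.support_takeUntil_subset _ _ (by simpa using hw'))
    · exact hp w (by simpa using hw')

end Walks
section Mid

variable {V : Type} {G : SimpleGraph V}

open Classical in
/-- Median bag argument: three disjoint well-represented linked sets force a large bag. -/
lemma PathDecomp.mid (P : PathDecomp G) (T : Set V) (A : Fin 3 → Set V)
    (hsub : ∀ a, A a ⊆ T)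
    (j : Fin 3 → Fin P.n) (r : ℕ)
    (hcard : ∀ a, r + 1 ≤ ((P.bag (j a)).filter (· ∈ A a)).card)
    (hlink : ∀ a b t : Fin 3, a ≠ b → a ≠ t → b ≠ t → ∀ u ∈ A a, ∀ w ∈ A b,
      ∃ p : G.Walk u w, ∀ x ∈ p.support, x ∈ T ∧ x ∉ A t) :
    ∃ jj, r + 2 ≤ ((P.bag jj).filter (· ∈ T)).card := by
  have main : ∀ a b t : Fin 3, a ≠ b → a ≠ t → b ≠ t → j a ≤ j b → j b ≤ j t →
      ∃ jj, r + 2 ≤ ((P.bag jj).filter (· ∈ T)).card := by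
    intro a b t hab hat hbt h1 h2
    obtain ⟨u, hu⟩ := Finset.card_pos.mp (lt_of_lt_of_le (Nat.succ_pos r) (hcard a))
    obtain ⟨w, hw⟩ := Finset.card_pos.mp (lt_of_lt_of_le (Nat.succ_pos r) (hcard t))
    rw [Finset.mem_filter] at hu hw
    obtain ⟨p, hp⟩ := hlink a t b hat hab (fun he => hbt he.symm) u hu.2 w hw.2
    obtain ⟨v, hvp, hvb⟩ := P.cross p h1 h2 hu.1 hw.1
    refine ⟨j b, ?_⟩
    have hvT : v ∈ T := (hp v hvp).1
    have hvA : v ∉ A b := (hp v hvp).2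
    have hins : insert v ((P.bag (j b)).filter (· ∈ A b)) ⊆ (P.bag (j b)).filter (· ∈ T) := by
      intro x hx
      rcases Finset.mem_insert.mp hx with rfl | hx'
      · exact Finset.mem_filter.mpr ⟨hvb, hvT⟩
      · rw [Finset.mem_filter] at hx' ⊢
        exact ⟨hx'.1, hsub b hx'.2⟩
    have hnotmem : v ∉ (P.bag (j b)).filter (· ∈ A b) := by
      rw [Finset.mem_filter]
      exact fun hc => hvA hc.2
    calc r + 2 ≤ ((P.bag (j b)).filter (· ∈ A b)).card + 1 := by
            have := hcard b; omega
      _ = (insert v ((P.bag (j b)).filter (· ∈ A b))).card :=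
            (Finset.card_insert_of_notMem hnotmem).symm
      _ ≤ _ := Finset.card_le_card hins
  rcases le_total (j 0) (j 1) with h01 | h10
  · rcases le_total (j 1) (j 2) with h12 | h21
    · exact main 0 1 2 (by decide) (by decide) (by decide) h01 h12
    · rcases le_total (j 0) (j 2) with h02 | h20
      · exact main 0 2 1 (by decide) (by decide) (by decide) h02 h21
      · exact main 2 0 1 (by decide) (by decide) (by decide) h20 h01
  · rcases le_total (j 0) (j 2) with h02 | h20
    · exact main 1 0 2 (by decide) (by decide) (by decide) h10 h02
    · rcases le_total (j 1) (j 2) with h12 | h21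
      · exact main 1 2 0 (by decide) (by decide) (by decide) h12 h20
      · exact main 2 1 0 (by decide) (by decide) (by decide) h21 h10

end Mid
section Link

variable {V : Type} {G : SimpleGraph V}

/-- Linkage between two restrictions avoiding a third, given a suitable trunk walk. -/
lemma SubdivCopy.linkHelper {h na nb nt : ℕ} (c : SubdivCopy (CBT h) G)
    {sa sb st : List Bool} (ha : sa.length + na ≤ h) (hb : sb.length + nb ≤ h)
    (ht : st.length + nt ≤ h)
    (trunk : G.Walk ((c.restrict sa ha).φ ⟨[], by simp⟩) ((c.restrict sb hb).φ ⟨[], by simp⟩))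
    (htrunk : ∀ x ∈ trunk.support, x ∈ c.supp ∧ x ∉ (c.restrict st ht).supp)
    (hdisja : ∀ v ∈ (c.restrict sa ha).supp, v ∉ (c.restrict st ht).supp)
    (hdisjb : ∀ v ∈ (c.restrict sb hb).supp, v ∉ (c.restrict st ht).supp) :
    ∀ u ∈ (c.restrict sa ha).supp, ∀ w ∈ (c.restrict sb hb).supp,
      ∃ p : G.Walk u w, ∀ x ∈ p.support, x ∈ c.supp ∧ x ∉ (c.restrict st ht).supp := by
  intro u hu w hw
  obtain ⟨pa, hpa⟩ := (c.restrict sa ha).rootWalk hu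
  obtain ⟨pb, hpb⟩ := (c.restrict sb hb).rootWalk hw
  refine ⟨pa.append (trunk.append pb.reverse), ?_⟩
  intro x hx
  rcases (SimpleGraph.Walk.mem_support_append_iff _ _).mp hx with hx' | hx'
  · have := hpa x hx'
    exact ⟨c.restrict_supp_subset sa ha this, hdisja x this⟩
  · rcases (SimpleGraph.Walk.mem_support_append_iff _ _).mp hx' with hx'' | hx''
    · exact htrunk x hx''
    · have := hpb x (by simpa using hx'')
      exact ⟨c.restrict_supp_subset sb hb this, hdisjb x this⟩

end Link
lemma walk_exists_adj_of_ne {V : Type} {G : SimpleGraph V} {u w : V} (p : G.Walk u w)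
    (h : u ≠ w) : ∃ x, G.Adj u x ∧ x ∈ p.support := by
  cases p with
  | nil => exact absurd rfl h
  | cons ha q => exact ⟨_, ha, by simp [SimpleGraph.Walk.start_mem_support]⟩
section Key

open Classical in
/-- Key lemma: any path decomposition of a graph containing a subdivision copy of `CBT h`
has a bag containing at least `(h+1)/2 + 1` vertices of the copy's support. -/
lemma key_lemma : ∀ (h : ℕ) {V : Type} (G : SimpleGraph V) (c : SubdivCopy (CBT h) G)
    (P : PathDecomp G), ∃ j, (h + 1) / 2 + 1 ≤ ((P.bag j).filter (· ∈ c.supp)).card := by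
  intro h
  induction h using Nat.strong_induction_on with
  | _ h IH =>
  intro V G c P
  match h, IH with
  | 0, _ =>
    obtain ⟨j, hj⟩ := P.covers (c.φ ⟨[], by simp⟩)
    refine ⟨j, ?_⟩
    have : c.φ ⟨[], by simp⟩ ∈ (P.bag j).filter (· ∈ c.supp) :=
      Finset.mem_filter.mpr ⟨hj, c.mem_supp_φ _⟩
    have := Finset.card_pos.mpr ⟨_, this⟩
    omega
  | 1, _ =>
    have hadj : (CBT 1).Adj ⟨[], by simp⟩ ⟨[false], by simp⟩ := cbt_adj_cons false [] (by simp)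
    have hne : c.φ ⟨[], by simp⟩ ≠ c.φ ⟨[false], by simp⟩ := by
      intro he
      have := c.inj he
      simp at this
    obtain ⟨u2, hGadj, hu2⟩ := walk_exists_adj_of_ne (c.path hadj) hne
    obtain ⟨j, hj1, hj2⟩ := P.coversEdge hGadj
    refine ⟨j, ?_⟩
    have h1 : c.φ ⟨[], by simp⟩ ∈ (P.bag j).filter (· ∈ c.supp) :=
      Finset.mem_filter.mpr ⟨hj1, c.mem_supp_φ _⟩
    have h2 : u2 ∈ (P.bag j).filter (· ∈ c.supp) :=
      Finset.mem_filter.mpr ⟨hj2, c.mem_supp_path hadj hu2⟩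
    have : 1 < ((P.bag j).filter (· ∈ c.supp)).card :=
      Finset.one_lt_card.mpr ⟨_, h1, _, h2, hGadj.ne⟩
    omega
  | (n+2), IH =>
    -- the three subtrees
    have hs1 : ([false, false] : List Bool).length + n ≤ n + 2 := by simp; omega
    have hs2 : ([true, false] : List Bool).length + n ≤ n + 2 := by simp; omega
    have hs3 : ([true] : List Bool).length + (n + 1) ≤ n + 2 := by simp; omega
    set c1 := c.restrict [false, false] hs1 with hc1
    set c2 := c.restrict [true, false] hs2 with hc2
    set c3 := c.restrict [true] hs3 with hc3
    obtain ⟨j1, hj1⟩ := IH n (by omega) G c1 P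
    obtain ⟨j2, hj2⟩ := IH n (by omega) G c2 P
    obtain ⟨j3, hj3⟩ := IH (n+1) (by omega) G c3 P
    -- disjointness of supports
    have d12 : ∀ v ∈ c1.supp, v ∉ c2.supp := fun v h1 h2 =>
      c.restrict_disj hs1 hs2 (by decide) h1 h2
    have d21 : ∀ v ∈ c2.supp, v ∉ c1.supp := fun v h1 h2 =>
      c.restrict_disj hs2 hs1 (by decide) h1 h2
    have d13 : ∀ v ∈ c1.supp, v ∉ c3.supp := fun v h1 h2 =>
      c.restrict_disj hs1 hs3 (by decide) h1 h2
    have d31 : ∀ v ∈ c3.supp, v ∉ c1.supp := fun v h1 h2 =>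
      c.restrict_disj hs3 hs1 (by decide) h1 h2
    have d23 : ∀ v ∈ c2.supp, v ∉ c3.supp := fun v h1 h2 =>
      c.restrict_disj hs2 hs3 (by decide) h1 h2
    have d32 : ∀ v ∈ c3.supp, v ∉ c2.supp := fun v h1 h2 =>
      c.restrict_disj hs3 hs2 (by decide) h1 h2
    -- tree edges of the trunk
    have e1 : (CBT (n+2)).Adj ⟨[false], by simp⟩ ⟨[false, false], by simp⟩ :=
      cbt_adj_cons false [false] (by simp)
    have e2 : (CBT (n+2)).Adj ⟨[false], by simp⟩ ⟨[true, false], by simp⟩ :=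
      cbt_adj_cons true [false] (by simp)
    have e3 : (CBT (n+2)).Adj ⟨[], by simp⟩ ⟨[false], by simp⟩ :=
      cbt_adj_cons false [] (by simp)
    have e4 : (CBT (n+2)).Adj ⟨[], by simp⟩ ⟨[true], by simp⟩ :=
      cbt_adj_cons true [] (by simp)
    -- trunk walks
    let t12 : G.Walk (c1.φ ⟨[], by simp⟩) (c2.φ ⟨[], by simp⟩) :=
      (c.path e1).reverse.append (c.path e2)
    let t13 : G.Walk (c1.φ ⟨[], by simp⟩) (c3.φ ⟨[], by simp⟩) :=
      (c.path e1).reverse.append ((c.path e3).reverse.append (c.path e4))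
    let t23 : G.Walk (c2.φ ⟨[], by simp⟩) (c3.φ ⟨[], by simp⟩) :=
      (c.path e2).reverse.append ((c.path e3).reverse.append (c.path e4))
    have ht12 : ∀ x ∈ t12.support, x ∈ c.supp ∧ x ∉ c3.supp := by
      intro x hx
      rcases (SimpleGraph.Walk.mem_support_append_iff _ _).mp hx with hx' | hx'
      · have hx'' : x ∈ (c.path e1).support :=
          List.mem_reverse.mp (by rw [← SimpleGraph.Walk.support_reverse]; exact hx')
        exact ⟨c.mem_supp_path e1 hx'',
          c.path_avoid_restrict [true] hs3 e1 (show ¬([true] : List Bool) <:+ [false] by decide) (show ¬([true] : List Bool) <:+ [false, false] by decide) hx''⟩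
      · exact ⟨c.mem_supp_path e2 hx',
          c.path_avoid_restrict [true] hs3 e2 (show ¬([true] : List Bool) <:+ [false] by decide) (show ¬([true] : List Bool) <:+ [true, false] by decide) hx'⟩
    have ht13 : ∀ x ∈ t13.support, x ∈ c.supp ∧ x ∉ c2.supp := by
      intro x hx
      rcases (SimpleGraph.Walk.mem_support_append_iff _ _).mp hx with hx' | hx'
      · have hx'' : x ∈ (c.path e1).support :=
          List.mem_reverse.mp (by rw [← SimpleGraph.Walk.support_reverse]; exact hx')
        exact ⟨c.mem_supp_path e1 hx'',
          c.path_avoid_restrict [true, false] hs2 e1 (show ¬([true, false] : List Bool) <:+ [false] by decide) (show ¬([true, false] : List Bool) <:+ [false, false] by decide) hx''⟩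
      · rcases (SimpleGraph.Walk.mem_support_append_iff _ _).mp hx' with hx'' | hx''
        · have hx3 : x ∈ (c.path e3).support := by simpa using hx''
          exact ⟨c.mem_supp_path e3 hx3,
            c.path_avoid_restrict [true, false] hs2 e3 (show ¬([true, false] : List Bool) <:+ [] by decide) (show ¬([true, false] : List Bool) <:+ [false] by decide) hx3⟩
        · exact ⟨c.mem_supp_path e4 hx'',
            c.path_avoid_restrict [true, false] hs2 e4 (show ¬([true, false] : List Bool) <:+ [] by decide) (show ¬([true, false] : List Bool) <:+ [true] by decide) hx''⟩
    have ht23 : ∀ x ∈ t23.support, x ∈ c.supp ∧ x ∉ c1.supp := by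
      intro x hx
      rcases (SimpleGraph.Walk.mem_support_append_iff _ _).mp hx with hx' | hx'
      · have hx'' : x ∈ (c.path e2).support :=
          List.mem_reverse.mp (by rw [← SimpleGraph.Walk.support_reverse]; exact hx')
        exact ⟨c.mem_supp_path e2 hx'',
          c.path_avoid_restrict [false, false] hs1 e2 (show ¬([false, false] : List Bool) <:+ [false] by decide) (show ¬([false, false] : List Bool) <:+ [true, false] by decide) hx''⟩
      · rcases (SimpleGraph.Walk.mem_support_append_iff _ _).mp hx' with hx'' | hx''
        · have hx3 : x ∈ (c.path e3).support := by simpa using hx''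
          exact ⟨c.mem_supp_path e3 hx3,
            c.path_avoid_restrict [false, false] hs1 e3 (show ¬([false, false] : List Bool) <:+ [] by decide) (show ¬([false, false] : List Bool) <:+ [false] by decide) hx3⟩
        · exact ⟨c.mem_supp_path e4 hx'',
            c.path_avoid_restrict [false, false] hs1 e4 (show ¬([false, false] : List Bool) <:+ [] by decide) (show ¬([false, false] : List Bool) <:+ [true] by decide) hx''⟩
    -- linkage statements
    have L12 := c.linkHelper hs1 hs2 hs3 t12 ht12 d13 d23
    have L13 := c.linkHelper hs1 hs3 hs2 t13 ht13 d12 d32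
    have L23 := c.linkHelper hs2 hs3 hs1 t23 ht23 d21 d31
    have L21 : ∀ u ∈ c2.supp, ∀ w ∈ c1.supp,
        ∃ p : G.Walk u w, ∀ x ∈ p.support, x ∈ c.supp ∧ x ∉ c3.supp := by
      intro u hu w hw
      obtain ⟨p, hp⟩ := L12 w hw u hu
      exact ⟨p.reverse, fun x hx => hp x (by simpa using hx)⟩
    have L31 : ∀ u ∈ c3.supp, ∀ w ∈ c1.supp,
        ∃ p : G.Walk u w, ∀ x ∈ p.support, x ∈ c.supp ∧ x ∉ c2.supp := by
      intro u hu w hw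
      obtain ⟨p, hp⟩ := L13 w hw u hu
      exact ⟨p.reverse, fun x hx => hp x (by simpa using hx)⟩
    have L32 : ∀ u ∈ c3.supp, ∀ w ∈ c2.supp,
        ∃ p : G.Walk u w, ∀ x ∈ p.support, x ∈ c.supp ∧ x ∉ c1.supp := by
      intro u hu w hw
      obtain ⟨p, hp⟩ := L23 w hw u hu
      exact ⟨p.reverse, fun x hx => hp x (by simpa using hx)⟩
    -- assemble data for the median lemma
    set A : Fin 3 → Set V := ![c1.supp, c2.supp, c3.supp] with hA
    set jf : Fin 3 → Fin P.n := ![j1, j2, j3] with hjf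
    have hsub : ∀ a, A a ⊆ c.supp := by
      intro a
      fin_cases a
      · exact c.restrict_supp_subset _ hs1
      · exact c.restrict_supp_subset _ hs2
      · exact c.restrict_supp_subset _ hs3
    have hcard : ∀ a, (n + 1) / 2 + 1 ≤ ((P.bag (jf a)).filter (· ∈ A a)).card := by
      intro a
      fin_cases a
      · simpa [hA, hjf] using hj1
      · simpa [hA, hjf] using hj2
      · have h' : (n + 1) / 2 + 1 ≤ (n + 1 + 1) / 2 + 1 := by omega
        exact le_trans h' (by simpa [hA, hjf] using hj3)
    have hlink : ∀ a b t : Fin 3, a ≠ b → a ≠ t → b ≠ t → ∀ u ∈ A a, ∀ w ∈ A b,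
        ∃ p : G.Walk u w, ∀ x ∈ p.support, x ∈ c.supp ∧ x ∉ A t := by
      intro a b t hab hat hbt
      fin_cases a <;> fin_cases b <;> fin_cases t <;>
        simp only [hA, Matrix.cons_val_zero, Matrix.cons_val_one, Matrix.head_cons,
          Matrix.cons_val_two, Matrix.tail_cons] <;>
        first
          | exact absurd rfl hab
          | exact absurd rfl hat
          | exact absurd rfl hbt
          | exact L12
          | exact L13
          | exact L21
          | exact L23
          | exact L31
          | exact L32
    obtain ⟨jj, hjj⟩ := P.mid c.supp A hsub jf ((n + 1) / 2) hcard hlink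
    exact ⟨jj, by omega⟩

end Key
/-- Every graph is a subdivision copy of itself. -/
def selfCopy {V : Type} (G : SimpleGraph V) : SubdivCopy G G where
  φ := id
  inj := fun _ _ h => h
  path := fun _ _ h => SimpleGraph.Walk.cons h .nil
  isPath := fun _ _ h => by simp [SimpleGraph.Walk.isPath_def, h.ne]
  branch := by
    intro x y h z hz
    simpa using hz
  disj := by
    intro x y x' y' h h' hne v hv hv'
    simp only [SimpleGraph.Walk.support_cons, SimpleGraph.Walk.support_nil, List.mem_cons,
      List.mem_singleton, List.not_mem_nil, or_false] at hv hv'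
    refine ⟨v, ⟨?_, ?_⟩, rfl⟩
    · rcases hv with rfl | rfl
      · exact Set.mem_insert _ _
      · exact Set.mem_insert_of_mem _ rfl
    · rcases hv' with rfl | rfl
      · exact Set.mem_insert _ _
      · exact Set.mem_insert_of_mem _ rfl

theorem stmt11 (h : ℕ) :
    (∀ k, PwLE (CBT h) k → (h + 1) / 2 ≤ k) ∧
    (∀ (W : Type) (S : SimpleGraph W), IsSubdivisionOf (CBT h) S →
      ∀ k, PwLE S k → (h + 1) / 2 ≤ k) := by
  classical
  constructor
  · rintro k ⟨P, hP⟩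
    obtain ⟨j, hj⟩ := key_lemma h (CBT h) (selfCopy _) P
    have h1 := Finset.card_filter_le (P.bag j) (· ∈ (selfCopy (CBT h)).supp)
    have h2 := hP j
    omega
  · rintro W S ⟨c, -, -⟩ k ⟨P, hP⟩
    obtain ⟨j, hj⟩ := key_lemma h S c P
    have h1 := Finset.card_filter_le (P.bag j) (· ∈ c.supp)
    have h2 := hP j
    omega
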